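/- For all words u, v over a nonempty finite alphabet A, h(u·v) ≤ max(h(u) + ρ(v), ρ(u) + h(v)). -/

import Mathlib

/-- Simon's congruence of order `k`: `u` and `v` have the same subwords
(subsequences) of length at most `k`. -/
def SimonCong {A : Type*} (k : ℕ) (u v : List A) : Prop :=
  ∀ s : List A, s.length ≤ k → (s.Sublist u ↔ s.Sublist v)

/-- The subword distance `δ(u,v) = sup {k | u ∼ₖ v} ∈ ℕ ∪ {∞}`. -/
noncomputable def delta {A : Type*} (u v : List A) : ℕ∞ :=
  ⨆ k ∈ {k : ℕ | SimonCong k u v}, (k : ℕ∞)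

/-- Right side distance `r(u,t) = δ(u, u·t)`. -/
noncomputable def sideR {A : Type*} (u t : List A) : ℕ∞ :=
  delta u (u ++ t)

/-- Left side distance `ℓ(t,u) = δ(t·u, u)`. -/
noncomputable def sideL {A : Type*} (t u : List A) : ℕ∞ :=
  delta (t ++ u) u

/-- The piecewise complexity `h(u)`: the least `n` such that every word
`v` with `u ∼ₙ v` equals `u`. -/
noncomputable def pieceH {A : Type*} (u : List A) : ℕ :=
  sInf {n : ℕ | ∀ v : List A, SimonCong n u v → v = u}

/-- A word `u` is `m`-reduced if no strict subword of `u` is `∼ₘ`-equivalent to `u`. -/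
def MReduced {A : Type*} (m : ℕ) (u : List A) : Prop :=
  ∀ u' : List A, u'.Sublist u → u' ≠ u → ¬ SimonCong m u' u

/-- The piecewise minimality index `ρ(u)`: the least `m` such that `u` is `m`-reduced. -/
noncomputable def rho {A : Type*} (u : List A) : ℕ :=
  sInf {m : ℕ | MReduced m u}

section Auxiliary

open List

variable {A : Type*}

/-- Greedy remainder: leftmost embedding of `x` into `w`, returning the rest of `w`. -/
def gRem [DecidableEq A] : List A → List A → Option (List A)
  | [], w => some w
  | _ :: _, [] => none
  | a :: x, b :: w => if a = b then gRem x w else gRem (a :: x) w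

theorem gRem_suffix [DecidableEq A] :
    ∀ (x w : List A) {w'}, gRem x w = some w' → w' <:+ w := by
  intro x w
  induction w generalizing x with
  | nil =>
    intro w' h
    cases x with
    | nil => simp [gRem] at h; subst h; exact List.suffix_rfl
    | cons a x => simp [gRem] at h
  | cons b w ih =>
    intro w' h
    cases x with
    | nil => simp [gRem] at h; subst h; exact List.suffix_rfl
    | cons a x =>
      by_cases hab : a = b
      · simp [gRem, hab] at h
        exact (ih _ h).trans (List.suffix_cons b w)
      · simp [gRem, hab] at h
        exact (ih _ h).trans (List.suffix_cons b w)

theorem gRem_length_lt [DecidableEq A] (a : A) (x : List A) :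
    ∀ (w : List A) {w'}, gRem (a :: x) w = some w' → w'.length < w.length := by
  intro w w' h
  cases w with
  | nil => simp [gRem] at h
  | cons b w =>
    by_cases hab : a = b
    · simp [gRem, hab] at h
      have := (gRem_suffix _ _ h).length_le
      simpa using Nat.lt_succ_of_le this
    · simp [gRem, hab] at h
      have := (gRem_suffix _ _ h).length_le
      simpa using Nat.lt_succ_of_le this

theorem gRem_isSome [DecidableEq A] :
    ∀ (x w : List A), x <+ w → ∃ w', gRem x w = some w' := by
  intro x w
  induction w generalizing x with
  | nil =>
    intro h
    rw [List.sublist_nil] at h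
    subst h
    exact ⟨[], rfl⟩
  | cons b w ih =>
    intro h
    cases x with
    | nil => exact ⟨b :: w, rfl⟩
    | cons a x =>
      by_cases hab : a = b
      · cases h with
        | cons _ h' =>
          obtain ⟨w', hw'⟩ := ih _ ((List.sublist_cons_self a x).trans h')
          exact ⟨w', by simp [gRem, hab, hw']⟩
        | cons_cons _ h' =>
          obtain ⟨w', hw'⟩ := ih _ h'
          exact ⟨w', by simp [gRem, hab, hw']⟩
      · cases h with
        | cons _ h' =>
          obtain ⟨w', hw'⟩ := ih _ h'
          exact ⟨w', by simp [gRem, hab, hw']⟩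
        | cons_cons _ h' => exact absurd rfl hab

theorem gRem_spec [DecidableEq A] :
    ∀ (x w : List A) {w'}, gRem x w = some w' → ∀ y, (x ++ y <+ w ↔ y <+ w') := by
  intro x w
  induction w generalizing x with
  | nil =>
    intro w' h y
    cases x with
    | nil => simp [gRem] at h; subst h; simp
    | cons a x => simp [gRem] at h
  | cons b w ih =>
    intro w' h y
    cases x with
    | nil => simp [gRem] at h; subst h; simp
    | cons a x =>
      by_cases hab : a = b
      · simp only [gRem, if_pos hab] at h
        constructor
        · intro hsub
          rw [List.cons_append] at hsub
          cases hsub with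
          | cons _ h' => exact (ih _ h _).mp ((List.sublist_cons_self _ _).trans h')
          | cons_cons _ h' => exact (ih _ h _).mp h'
        · intro hy
          subst hab
          exact List.Sublist.cons₂ _ ((ih _ h _).mpr hy)
      · simp only [gRem, if_neg hab] at h
        constructor
        · intro hsub
          rw [List.cons_append] at hsub
          cases hsub with
          | cons _ h' => exact (ih _ h _).mp h'
          | cons_cons _ h' => exact absurd rfl hab
        · intro hy
          exact ((ih _ h y).mpr hy).cons b

theorem SimonCong.symm' {k : ℕ} {x y : List A} (h : SimonCong k x y) : SimonCong k y x :=
  fun s hs => (h s hs).symm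

theorem cons_sublist_drop_one {a : A} {l w : List A} (h : (a :: l) <+ w) : l <+ w.drop 1 := by
  cases w with
  | nil => simp at h
  | cons b w' =>
    cases h with
    | cons _ h' => exact (List.sublist_cons_self a l).trans h'
    | cons_cons _ h' => exact h'

theorem mReduced_rho (u : List A) : MReduced (rho u) u := by
  have hne : {m : ℕ | MReduced m u}.Nonempty := by
    refine ⟨u.length, fun u' hsub hne hcong => ?_⟩
    have h1 : u <+ u' := (hcong u le_rfl).mpr (List.Sublist.refl u)
    exact hne (hsub.antisymm h1)
  exact Nat.sInf_mem hne

theorem pieceH_spec (u : List A) : ∀ v : List A, SimonCong (pieceH u) u v → v = u := by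
  have hne : {n : ℕ | ∀ v : List A, SimonCong n u v → v = u}.Nonempty := by
    refine ⟨u.length + 1, fun v hcong => ?_⟩
    have huv : u <+ v := (hcong u (by omega)).mp (List.Sublist.refl u)
    by_cases hlen : v.length ≤ u.length + 1
    · have hvu : v <+ u := (hcong v hlen).mpr (List.Sublist.refl v)
      exact hvu.antisymm huv
    · exfalso
      push_neg at hlen
      have hp : v.take (u.length + 1) <+ u :=
        (hcong _ (by simp)).mpr ((List.take_prefix _ v).sublist)
      have := hp.length_le
      simp [List.length_take] at this
      omega
  exact Nat.sInf_mem hne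

/-- Right cancellation: if `u'·v ∼ₖ u·v` and `v` is `d`-reduced, then every subword
of `u'` of length at most `k - d` is a subword of `u`. -/
theorem simonCong_right_cancel [DecidableEq A] {d k : ℕ} {u u' v : List A}
    (hred : MReduced d v) (hcong : SimonCong k (u' ++ v) (u ++ v)) :
    ∀ s : List A, s.length + d ≤ k → s <+ u' → s <+ u := by
  classical
  intro s hlen hsu'
  by_contra hsu
  set P : ℕ → Prop := fun i => s.take i <+ u with hP
  have hP0 : P 0 := by simp [hP]
  set j := Nat.findGreatest P s.length with hj
  have hPj : P j := Nat.findGreatest_spec (Nat.zero_le _) hP0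
  have hjle : j ≤ s.length := Nat.findGreatest_le _
  have hjlt : j < s.length := by
    rcases lt_or_eq_of_le hjle with h | h
    · exact h
    · exact absurd (by simpa [hP, h] using hPj) hsu
  have hene : s.drop j ≠ [] := by
    intro h
    have := congrArg List.length h
    simp at this; omega
  have key : ∀ r : List A, r <+ v → r.length ≤ d → s.drop j ++ r <+ v := by
    intro r hrv hrd
    have h1 : s ++ r <+ u' ++ v := hsu'.append hrv
    have h2 : s ++ r <+ u ++ v := (hcong _ (by simp; omega)).mp h1
    rcases List.sublist_append_iff.mp h2 with ⟨α, β, heq, hα, hβ⟩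
    rcases List.append_eq_append_iff.mp heq with ⟨a', ha1, _⟩ | ⟨c, hc1, hc2⟩
    · exact absurd ((List.IsPrefix.sublist ⟨a', ha1.symm⟩).trans hα) hsu
    · have hαs : α.length ≤ s.length := by rw [hc1]; simp
      have hPα : P α.length := by
        show s.take α.length <+ u
        have : s.take α.length = α := by rw [hc1, List.take_left]
        rwa [this]
      have hαj : α.length ≤ j := Nat.le_findGreatest hαs hPα
      have hcdrop : s.drop α.length = c := by rw [hc1, List.drop_left]
      have hsub2 : s.drop j <+ s.drop α.length := by
        have h := List.drop_sublist (j - α.length) (s.drop α.length)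
        rwa [List.drop_drop, Nat.add_sub_cancel' hαj] at h
      rw [hcdrop] at hsub2
      exact (hsub2.append (List.Sublist.refl r)).trans (hc2 ▸ hβ)
  obtain ⟨v₀, hrem⟩ := gRem_isSome _ v (by simpa using key [] (List.nil_sublist v) (by simp))
  have hv₀v : v₀ <+ v := (gRem_suffix _ _ hrem).sublist
  have hlt : v₀.length < v.length := by
    obtain ⟨a, e', hae⟩ := List.exists_cons_of_ne_nil hene
    exact gRem_length_lt a e' v (hae ▸ hrem)
  refine hred v₀ hv₀v (fun h => by rw [h] at hlt; omega) ?_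
  intro r hrd
  constructor
  · exact fun h => h.trans hv₀v
  · intro hrv
    exact (gRem_spec _ _ hrem r).mp (key r hrv hrd)

/-- Splitting: if `w ∼ₖ u·v`, `u` is `d`-reduced and `d + n ≤ k`, then `w`
splits as `w₁ ++ w₂` with `w₂ ∼ₙ v`. -/
theorem simonCong_split [DecidableEq A] {d n k : ℕ} {u v w : List A}
    (hred : MReduced d u) (hcong : SimonCong k w (u ++ v)) (hk : d + n ≤ k) :
    ∃ w₁ w₂, w = w₁ ++ w₂ ∧ SimonCong n w₂ v := by
  classical
  set P : ℕ → Prop := fun i => ∀ t : List A, t <+ v → t.length ≤ n → t <+ w.drop i with hP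
  have hP0 : P 0 := by
    intro t htv htn
    have h0 : t <+ u ++ v := htv.trans (List.sublist_append_right u v)
    simpa using (hcong t (by omega)).mpr h0
  set i₀ := Nat.findGreatest P w.length with hi₀
  have hPi₀ : P i₀ := Nat.findGreatest_spec (Nat.zero_le _) hP0
  have hile : i₀ ≤ w.length := Nat.findGreatest_le _
  by_cases hi : i₀ = w.length
  · refine ⟨w, [], by simp, ?_⟩
    intro s hs
    constructor
    · intro h
      rw [List.sublist_nil] at h
      simp [h]
    · intro hsv
      have := hPi₀ s hsv hs
      rwa [hi, List.drop_length] at this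
  · have hilt : i₀ < w.length := lt_of_le_of_ne hile hi
    have hnP : ¬ P (i₀ + 1) :=
      Nat.findGreatest_is_greatest (by rw [← hi₀]; omega) (by omega)
    obtain ⟨t, htv, htn, htw⟩ :
        ∃ t : List A, t <+ v ∧ t.length ≤ n ∧ ¬ t <+ w.drop (i₀ + 1) := by
      by_contra hh
      push_neg at hh
      exact hnP (fun t htv htn => hh t htv htn)
    refine ⟨w.take i₀, w.drop i₀, (List.take_append_drop _ _).symm, ?_⟩
    have hstar : ∀ r : List A, r <+ u → r.length ≤ d → r <+ w.take i₀ := by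
      intro r hru hrd
      have h1 : r ++ t <+ u ++ v := hru.append htv
      have h2 : r ++ t <+ w.take i₀ ++ w.drop i₀ := by
        rw [List.take_append_drop]
        exact (hcong _ (by simp; omega)).mpr h1
      rcases List.sublist_append_iff.mp h2 with ⟨α, β, heq, hα, hβ⟩
      rcases List.append_eq_append_iff.mp heq with ⟨a', ha1, _⟩ | ⟨c, hc1, hc2⟩
      · exact (List.IsPrefix.sublist ⟨a', ha1.symm⟩).trans hα
      · cases c with
        | nil => rw [List.append_nil] at hc1; exact hc1 ▸ hα
        | cons ch c' =>
          exfalso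
          apply htw
          have hb : (ch :: (c' ++ t)) <+ w.drop i₀ := by
            rw [hc2] at hβ; simpa using hβ
          have h3 := cons_sublist_drop_one hb
          rw [List.drop_drop] at h3
          exact (List.sublist_append_right c' t).trans h3
    intro s hs
    constructor
    · intro hsw2
      by_contra hsv
      have hsne : s ≠ [] := fun h => hsv (by simp [h])
      have hslen : s.length ≠ 0 := fun h => hsne (List.length_eq_zero_iff.mp h)
      have hex : ∃ i, s.drop i <+ v := ⟨s.length, by simp⟩
      set j := Nat.find hex with hjdef
      have hjs : s.drop j <+ v := Nat.find_spec hex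
      have hj0 : j ≠ 0 := fun h => hsv (by simpa [h] using hjs)
      have hgne : s.take j ≠ [] := by
        intro h
        have h' : min j s.length = 0 := by simpa using congrArg List.length h
        rcases Nat.min_eq_zero_iff.mp h' with h' | h'
        · exact hj0 h'
        · exact hslen h'
      have key : ∀ r : List A, r <+ u → r.length ≤ d → r ++ s.take j <+ u := by
        intro r hru hrd
        have h1 : r ++ s <+ w.take i₀ ++ w.drop i₀ := (hstar r hru hrd).append hsw2
        rw [List.take_append_drop] at h1
        have h2 : r ++ s <+ u ++ v := (hcong _ (by simp; omega)).mp h1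
        rcases List.sublist_append_iff.mp h2 with ⟨α, β, heq, hα, hβ⟩
        rcases List.append_eq_append_iff.mp heq with ⟨a', ha1, ha2⟩ | ⟨c, hc1, hc2⟩
        · have hβ' : s.drop a'.length <+ v := by rw [ha2, List.drop_left]; exact hβ
          have hjle' : j ≤ a'.length := Nat.find_min' hex hβ'
          have hga : s.take j <+ a' := by
            rw [ha2, List.take_append_of_le_length hjle']
            exact List.take_sublist j a'
          exact ((List.Sublist.refl r).append hga).trans (ha1 ▸ hα)
        · exact absurd ((List.sublist_append_right c s).trans (hc2 ▸ hβ)) hsv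
      exfalso
      have hgu : s.take j <+ u := by simpa using key [] (List.nil_sublist u) (by simp)
      have hgru : (s.take j).reverse <+ u.reverse := hgu.reverse
      obtain ⟨z, hremz⟩ := gRem_isSome _ _ hgru
      have hzu : z.reverse <+ u := by
        have h5 := ((gRem_suffix _ _ hremz).sublist).reverse
        rwa [List.reverse_reverse] at h5
      have hgrne : (s.take j).reverse ≠ [] := by simpa using hgne
      have hlt : z.length < u.length := by
        obtain ⟨a, g', hae⟩ := List.exists_cons_of_ne_nil hgrne
        have := gRem_length_lt a g' u.reverse (hae ▸ hremz)
        simpa using this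
      refine hred z.reverse hzu (fun h => by
        have := congrArg List.length h; simp at this; omega) ?_
      intro r hrd
      constructor
      · exact fun h => h.trans hzu
      · intro hru
        have h1 : r ++ s.take j <+ u := key r hru hrd
        have h2 : (s.take j).reverse ++ r.reverse <+ u.reverse := by
          have := h1.reverse
          rwa [List.reverse_append] at this
        have h3 : r.reverse <+ z := (gRem_spec _ _ hremz r.reverse).mp h2
        have h4 := h3.reverse
        rwa [List.reverse_reverse] at h4
    · intro hsv
      exact hPi₀ s hsv hs

end Auxiliary

theorem stmt11 {A : Type*} [Fintype A] [Nonempty A] (u v : List A) :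
    pieceH (u ++ v) ≤ max (pieceH u + rho v) (rho u + pieceH v) := by
  classical
  set N := max (pieceH u + rho v) (rho u + pieceH v) with hN
  have hmem : N ∈ {n : ℕ | ∀ z : List A, SimonCong n (u ++ v) z → z = u ++ v} := by
    intro z hz
    obtain ⟨w₁, w₂, hw, hcong2⟩ :=
      simonCong_split (mReduced_rho u) (SimonCong.symm' hz)
        (le_max_right (pieceH u + rho v) (rho u + pieceH v))
    have hw₂ : w₂ = v := pieceH_spec v w₂ (SimonCong.symm' hcong2)
    rw [hw₂] at hw
    rw [hw] at hz ⊢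
    have harith : ∀ s : List A, s.length ≤ pieceH u → s.length + rho v ≤ N := by
      intro s hs
      have := le_max_left (pieceH u + rho v) (rho u + pieceH v)
      omega
    have hw₁ : w₁ = u := by
      apply pieceH_spec u
      intro s hs
      constructor
      · intro hsu
        exact simonCong_right_cancel (mReduced_rho v) hz s (harith s hs) hsu
      · intro hsw
        exact simonCong_right_cancel (mReduced_rho v) (SimonCong.symm' hz) s (harith s hs) hsw
    rw [hw₁]
  exact Nat.sInf_le hmem
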